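/- (Perturbed supercritical roots converge) Fix branching generating functions $B_i$ with $\rho(1,\dots,1)\le0$ (so the smallest nonnegative root of $B_1=\cdots=B_n=0$ in $[0,1]^n$ is $(1,\dots,1)$). For $\varepsilon>0$ define $B_i^{(\varepsilon)}(u)=B_i(u)-\varepsilon u_i$. Then the system $B_1^{(\varepsilon)}=\cdots=B_n^{(\varepsilon)}=0$ has a smallest nonnegative solution $(q_1^{(\varepsilon)},\dots,q_n^{(\varepsilon)})\in[0,1)^n$, and $(q_1^{(\varepsilon)},\dots,q_n^{(\varepsilon)})\uparrow(1,\dots,1)$ as $\varepsilon\downarrow0$. -/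

import Mathlib

open Filter Topology Set

noncomputable def gen {n : ℕ} (a : (Fin n → ℕ) → ℝ) (u : Fin n → ℝ) : ℝ :=
  ∑' j : Fin n → ℕ, a j * ∏ l, u l ^ j l

def unitvec {n : ℕ} (k : Fin n) : Fin n → ℕ := fun l => if l = k then 1 else 0
namespace S16

noncomputable def clamp {n : ℕ} (u : Fin n → ℝ) : Fin n → ℝ := fun l => max 0 (min 1 (u l))

lemma clamp_mem {n : ℕ} (u : Fin n → ℝ) (l : Fin n) : clamp u l ∈ Icc (0:ℝ) 1 :=
  ⟨le_max_left _ _, max_le (by norm_num) (min_le_left _ _)⟩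

lemma clamp_eq_self {n : ℕ} {u : Fin n → ℝ} (h : ∀ l, u l ∈ Icc (0:ℝ) 1) : clamp u = u := by
  funext l
  simp [clamp, min_eq_right (h l).2, max_eq_right (h l).1]

lemma clamp_mono {n : ℕ} {u v : Fin n → ℝ} (h : u ≤ v) (l : Fin n) : clamp u l ≤ clamp v l :=
  max_le_max le_rfl (min_le_min le_rfl (h l))

lemma continuous_clamp {n : ℕ} : Continuous (clamp (n := n)) :=
  continuous_pi fun l => continuous_const.max (continuous_const.min (continuous_apply l))

noncomputable def term {n : ℕ} (a : (Fin n → ℕ) → ℝ) (e : Fin n → ℕ) (j : Fin n → ℕ)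
    (u : Fin n → ℝ) : ℝ := if j = e then 0 else a j * ∏ l, u l ^ j l

noncomputable def FF {n : ℕ} (a : (Fin n → ℕ) → ℝ) (e : Fin n → ℕ) (u : Fin n → ℝ) : ℝ :=
  ∑' j, term a e j u

lemma abs_prod_le_one {n : ℕ} {u : Fin n → ℝ} (hu : ∀ l, |u l| ≤ 1) (j : Fin n → ℕ) :
    |∏ l, u l ^ j l| ≤ 1 := by
  rw [Finset.abs_prod]
  refine Finset.prod_le_one (fun l _ => abs_nonneg _) (fun l _ => ?_)
  rw [abs_pow]
  exact pow_le_one₀ (abs_nonneg _) (hu l)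

lemma abs_mul_prod_le {n : ℕ} {a : (Fin n → ℕ) → ℝ} {u : Fin n → ℝ} (hu : ∀ l, |u l| ≤ 1)
    (j : Fin n → ℕ) : |a j * ∏ l, u l ^ j l| ≤ |a j| := by
  rw [abs_mul]
  calc |a j| * |∏ l, u l ^ j l| ≤ |a j| * 1 :=
        mul_le_mul_of_nonneg_left (abs_prod_le_one hu j) (abs_nonneg _)
    _ = |a j| := mul_one _

lemma abs_term_le {n : ℕ} {a : (Fin n → ℕ) → ℝ} {e : Fin n → ℕ} {u : Fin n → ℝ}
    (hu : ∀ l, |u l| ≤ 1) (j : Fin n → ℕ) : |term a e j u| ≤ |a j| := by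
  unfold term
  by_cases hj : j = e
  · simp [hj, abs_nonneg]
  · simpa [hj] using abs_mul_prod_le hu j

lemma summable_gen_terms {n : ℕ} {a : (Fin n → ℕ) → ℝ} (hs : Summable a) {u : Fin n → ℝ}
    (hu : ∀ l, |u l| ≤ 1) : Summable (fun j => a j * ∏ l, u l ^ j l) :=
  Summable.of_norm_bounded hs.abs (fun j => abs_mul_prod_le hu j)

lemma summable_term {n : ℕ} {a : (Fin n → ℕ) → ℝ} (hs : Summable a) (e : Fin n → ℕ)
    {u : Fin n → ℝ} (hu : ∀ l, |u l| ≤ 1) : Summable (fun j => term a e j u) :=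
  Summable.of_norm_bounded hs.abs (fun j => abs_term_le hu j)

lemma abs_le_one_of_mem {u : ℝ} (h : u ∈ Icc (0:ℝ) 1) : |u| ≤ 1 :=
  abs_le.2 ⟨by linarith [h.1], h.2⟩

lemma prod_unitvec {n : ℕ} (u : Fin n → ℝ) (i : Fin n) :
    ∏ l, u l ^ (unitvec i l) = u i := by
  rw [Finset.prod_eq_single i]
  · simp [unitvec]
  · intro l _ hl; simp [unitvec, hl]
  · simp

lemma gen_split {n : ℕ} {a : (Fin n → ℕ) → ℝ} (hs : Summable a) {u : Fin n → ℝ}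
    (hu : ∀ l, u l ∈ Icc (0:ℝ) 1) (i : Fin n) :
    gen a u = a (unitvec i) * u i + FF a (unitvec i) u := by
  have h1 := Summable.tsum_eq_add_tsum_ite (f := fun j => a j * ∏ l, u l ^ j l)
    (summable_gen_terms hs (fun l => abs_le_one_of_mem (hu l))) (unitvec i)
  rw [gen, h1, prod_unitvec]
  rfl

lemma FF_nonneg {n : ℕ} {a : (Fin n → ℕ) → ℝ} {e : Fin n → ℕ}
    (hnn : ∀ j, j ≠ e → 0 ≤ a j) {u : Fin n → ℝ} (hu : ∀ l, 0 ≤ u l) :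
    0 ≤ FF a e u := by
  refine tsum_nonneg fun j => ?_
  unfold term
  by_cases hj : j = e
  · simp [hj]
  · simp only [hj, if_false]
    exact mul_nonneg (hnn j hj) (Finset.prod_nonneg fun l _ => pow_nonneg (hu l) _)

lemma FF_mono {n : ℕ} {a : (Fin n → ℕ) → ℝ} {e : Fin n → ℕ} (hs : Summable a)
    (hnn : ∀ j, j ≠ e → 0 ≤ a j) {u v : Fin n → ℝ} (hu0 : ∀ l, 0 ≤ u l)
    (huv : u ≤ v) (hv1 : ∀ l, v l ≤ 1) : FF a e u ≤ FF a e v := by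
  have hu1 : ∀ l, |u l| ≤ 1 := fun l => abs_le.2 ⟨by linarith [hu0 l], (huv l).trans (hv1 l)⟩
  have hv0 : ∀ l, 0 ≤ v l := fun l => (hu0 l).trans (huv l)
  have hva : ∀ l, |v l| ≤ 1 := fun l => abs_le.2 ⟨by linarith [hv0 l], hv1 l⟩
  refine Summable.tsum_le_tsum (fun j => ?_) (summable_term hs e hu1) (summable_term hs e hva)
  unfold term
  by_cases hj : j = e
  · simp [hj]
  · simp only [hj, if_false]
    refine mul_le_mul_of_nonneg_left ?_ (hnn j hj)
    exact Finset.prod_le_prod (fun l _ => pow_nonneg (hu0 l) _)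
      (fun l _ => pow_le_pow_left₀ (hu0 l) (huv l) _)

lemma FF_one {n : ℕ} {a : (Fin n → ℕ) → ℝ} {e : Fin n → ℕ} {c : ℝ}
    (h : HasSum (fun j : {j : Fin n → ℕ // j ≠ e} => a j.1) c) :
    FF a e (fun _ => 1) = c := by
  have h2 : FF a e (fun _ => 1) = ∑' j, Set.indicator {j : Fin n → ℕ | j ≠ e} a j := by
    unfold FF term
    congr 1
    funext j
    by_cases hj : j = e <;> simp [hj, Set.indicator]
  rw [h2, ← tsum_subtype]
  exact h.tsum_eq

lemma FF_le {n : ℕ} {a : (Fin n → ℕ) → ℝ} {e : Fin n → ℕ} {c : ℝ} (hs : Summable a)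
    (hnn : ∀ j, j ≠ e → 0 ≤ a j)
    (h : HasSum (fun j : {j : Fin n → ℕ // j ≠ e} => a j.1) c)
    {u : Fin n → ℝ} (hu : ∀ l, u l ∈ Icc (0:ℝ) 1) : FF a e u ≤ c := by
  rw [← FF_one h]
  exact FF_mono hs hnn (fun l => (hu l).1) (fun l => (hu l).2) (fun _ => le_rfl)

lemma continuous_FFc {n : ℕ} {a : (Fin n → ℕ) → ℝ} (hs : Summable a) (e : Fin n → ℕ) :
    Continuous (fun u : Fin n → ℝ => FF a e (clamp u)) := by
  refine continuous_tsum (f := fun j u => term a e j (clamp u)) (fun j => ?_) hs.abs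
    (fun j u => ?_)
  · unfold term
    by_cases hj : j = e
    · simp [hj]; exact continuous_const
    · simp only [hj, if_false]
      exact continuous_const.mul (continuous_finset_prod _ fun l _ =>
        ((continuous_apply l).comp continuous_clamp).pow _)
  · exact abs_term_le (fun l => abs_le_one_of_mem (clamp_mem u l)) j

lemma continuous_genc {n : ℕ} {a : (Fin n → ℕ) → ℝ} (hs : Summable a) :
    Continuous (fun u : Fin n → ℝ => gen a (clamp u)) := by
  refine continuous_tsum (f := fun (j : Fin n → ℕ) u => a j * ∏ l, clamp u l ^ j l)
    (fun j => ?_) hs.abs (fun j u => ?_)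
  · exact continuous_const.mul (continuous_finset_prod _ fun l _ =>
      ((continuous_apply l).comp continuous_clamp).pow _)
  · exact abs_mul_prod_le (fun l => abs_le_one_of_mem (clamp_mem u l)) j

end S16


/-- perturbed supercritical roots converge: if the smallest
nonnegative root of `B_1 = ⋯ = B_n = 0` in `[0,1]^n` is `(1,…,1)`
(`ρ(1,…,1) ≤ 0`), then for every `ε > 0` the perturbed system
`B_i(u) - ε u_i = 0` has a smallest nonnegative solution `q^{(ε)} ∈ [0,1)^n`,
and `q^{(ε)} ↑ (1,…,1)` as `ε ↓ 0`. -/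
theorem stmt_16 {n : ℕ} (hn : 0 < n) (b : Fin n → (Fin n → ℕ) → ℝ)
    (hbnn : ∀ i j, j ≠ unitvec i → 0 ≤ b i j)
    (hbsum : ∀ i, Summable (b i))
    (hbval : ∀ i, HasSum (fun j : {j : Fin n → ℕ // j ≠ unitvec i} => b i j.1)
      (-(b i (unitvec i))))
    (hbpos : ∀ i, 0 < -(b i (unitvec i)))
    -- positive regularity of the mean matrix and nonsingularity
    (Bm : Matrix (Fin n) (Fin n) ℝ)
    (hBm : ∀ i l, HasSum (fun j : Fin n → ℕ => b i j * (j l : ℝ)) (Bm i l))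
    (G : Matrix (Fin n) (Fin n) ℝ)
    (hG : ∀ i l, G i l = (if i = l then (1:ℝ) else 0) - Bm i l / b i (unitvec i))
    (hreg : ∃ N : ℕ, ∀ i l, 0 < (G ^ N) i l)
    (hns : ¬ ∃ M : Matrix (Fin n) (Fin n) ℝ,
      ∀ i, ∀ u : Fin n → ℝ, (∀ l, u l ∈ Icc (0:ℝ) 1) →
        gen (b i) u = ∑ l, M i l * u l)
    -- `ρ(1,…,1) ≤ 0`: the smallest nonnegative root in `[0,1]^n` is `(1,…,1)`
    (hroot1 : ∀ i, gen (b i) (fun _ => 1) = 0)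
    (hmin1 : ∀ r : Fin n → ℝ, (∀ l, r l ∈ Icc (0:ℝ) 1) →
      (∀ i, gen (b i) r = 0) → r = fun _ => 1) :
    ∃ Q : ℝ → Fin n → ℝ,
      (∀ ε > (0:ℝ),
        (∀ l, Q ε l ∈ Ico (0:ℝ) 1) ∧
        (∀ i, gen (b i) (Q ε) - ε * Q ε i = 0) ∧
        (∀ r : Fin n → ℝ, (∀ l, r l ∈ Icc (0:ℝ) 1) →
          (∀ i, gen (b i) r - ε * r i = 0) → ∀ l, Q ε l ≤ r l)) ∧
      (∀ ε1 ε2 : ℝ, 0 < ε1 → ε1 ≤ ε2 → ∀ l, Q ε2 l ≤ Q ε1 l) ∧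
      Tendsto Q (nhdsWithin 0 (Ioi 0)) (nhds fun _ => 1) := by
  classical
  set c : Fin n → ℝ := fun i => -(b i (unitvec i)) with hc_def
  have hc : ∀ i, 0 < c i := hbpos
  set Phi : ℝ → (Fin n → ℝ) → Fin n → ℝ :=
    fun ε u i => S16.FF (b i) (unitvec i) (S16.clamp u) / (ε + c i) with hPhi_def
  set sq : ℝ → ℕ → Fin n → ℝ := fun ε k => (Phi ε)^[k] 0 with hsq_def
  set Q : ℝ → Fin n → ℝ := fun ε l => ⨆ k, sq ε k l with hQ_def
  have hden : ∀ ε : ℝ, 0 ≤ ε → ∀ i, 0 < ε + c i := fun ε hε i => by linarith [hc i]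
  have hFFmem : ∀ (i : Fin n) (u : Fin n → ℝ),
      S16.FF (b i) (unitvec i) (S16.clamp u) ∈ Icc 0 (c i) := by
    intro i u
    exact ⟨S16.FF_nonneg (hbnn i) (fun l => (S16.clamp_mem u l).1),
      S16.FF_le (hbsum i) (hbnn i) (hbval i) (S16.clamp_mem u)⟩
  have hfrac_lt_one : ∀ ε : ℝ, 0 < ε → ∀ i, c i / (ε + c i) < 1 := by
    intro ε hε i
    rw [div_lt_one (hden ε hε.le i)]
    linarith
  have hfrac_nonneg : ∀ ε : ℝ, 0 ≤ ε → ∀ i, 0 ≤ c i / (ε + c i) := fun ε hε i =>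
    div_nonneg (hc i).le (hden ε hε i).le
  have hPhi_mem : ∀ ε : ℝ, 0 ≤ ε → ∀ u i, Phi ε u i ∈ Icc 0 (c i / (ε + c i)) := by
    intro ε hε u i
    refine ⟨div_nonneg (hFFmem i u).1 (hden ε hε i).le, ?_⟩
    simp only [hPhi_def]
    exact div_le_div_of_nonneg_right (hFFmem i u).2 (hden ε hε i).le
  have hPhi_mono : ∀ ε : ℝ, 0 ≤ ε → ∀ u v : Fin n → ℝ, u ≤ v → Phi ε u ≤ Phi ε v := by
    intro ε hε u v huv i
    simp only [hPhi_def]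
    refine div_le_div_of_nonneg_right ?_ (hden ε hε i).le
    exact S16.FF_mono (hbsum i) (hbnn i) (fun l => (S16.clamp_mem u l).1)
        (fun l => S16.clamp_mono huv l) (fun l => (S16.clamp_mem v l).2)
  have hsq_succ : ∀ ε k, sq ε (k + 1) = Phi ε (sq ε k) := by
    intro ε k
    simp only [hsq_def, Function.iterate_succ_apply']
  have hsq_mem : ∀ ε : ℝ, 0 ≤ ε → ∀ k l, sq ε k l ∈ Icc (0:ℝ) 1 := by
    intro ε hε k
    induction k with
    | zero => intro l; simp [hsq_def]
    | succ k _ =>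
      intro l
      rw [hsq_succ]
      exact ⟨(hPhi_mem ε hε _ l).1,
        le_trans (hPhi_mem ε hε _ l).2 (by rw [div_le_one (hden ε hε l)]; linarith [hc l])⟩
  have hsq_mono : ∀ ε : ℝ, 0 ≤ ε → Monotone (fun k => sq ε k) := by
    intro ε hε
    apply monotone_nat_of_le_succ
    intro k
    induction k with
    | zero =>
      intro l
      rw [hsq_succ]
      have := (hPhi_mem ε hε 0 l).1
      simpa [hsq_def] using this
    | succ k ih =>
      rw [hsq_succ, hsq_succ]
      exact hPhi_mono ε hε _ _ ih
  have hbdd : ∀ (ε : ℝ), 0 ≤ ε → ∀ l, BddAbove (range fun k => sq ε k l) := by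
    intro ε hε l
    refine ⟨1, ?_⟩
    rintro x ⟨k, rfl⟩
    exact (hsq_mem ε hε k l).2
  have hQ_nonneg : ∀ ε : ℝ, 0 ≤ ε → ∀ l, 0 ≤ Q ε l := by
    intro ε hε l
    have h0 : sq ε 0 l = 0 := by simp [hsq_def]
    calc (0:ℝ) = sq ε 0 l := h0.symm
      _ ≤ Q ε l := le_ciSup (hbdd ε hε l) 0
  have hQ_le_frac : ∀ ε : ℝ, 0 < ε → ∀ l, Q ε l ≤ c l / (ε + c l) := by
    intro ε hε l
    refine ciSup_le fun k => ?_
    cases k with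
    | zero => simpa [hsq_def] using hfrac_nonneg ε hε.le l
    | succ k => rw [hsq_succ]; exact (hPhi_mem ε hε.le _ l).2
  have hQ_lt_one : ∀ ε : ℝ, 0 < ε → ∀ l, Q ε l < 1 :=
    fun ε hε l => lt_of_le_of_lt (hQ_le_frac ε hε l) (hfrac_lt_one ε hε l)
  have hQ_Icc : ∀ ε : ℝ, 0 < ε → ∀ l, Q ε l ∈ Icc (0:ℝ) 1 :=
    fun ε hε l => ⟨hQ_nonneg ε hε.le l, (hQ_lt_one ε hε l).le⟩
  have hQ_tendsto : ∀ ε : ℝ, 0 ≤ ε → Tendsto (fun k => sq ε k) atTop (nhds (Q ε)) := by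
    intro ε hε
    rw [tendsto_pi_nhds]
    intro l
    exact tendsto_atTop_ciSup (fun k m hkm => hsq_mono ε hε hkm l) (hbdd ε hε l)
  have hPhi_cont : ∀ ε : ℝ, Continuous (Phi ε) := by
    intro ε
    refine continuous_pi fun i => ?_
    exact (S16.continuous_FFc (hbsum i) (unitvec i)).div_const _
  have hQ_fixed : ∀ ε : ℝ, 0 < ε → Phi ε (Q ε) = Q ε := by
    intro ε hε
    have h1 : Tendsto (fun k => sq ε (k + 1)) atTop (nhds (Q ε)) :=
      (hQ_tendsto ε hε.le).comp (tendsto_add_atTop_nat 1)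
    have h2 : Tendsto (fun k => Phi ε (sq ε k)) atTop (nhds (Phi ε (Q ε))) :=
      ((hPhi_cont ε).tendsto (Q ε)).comp (hQ_tendsto ε hε.le)
    have h3 : (fun k => sq ε (k + 1)) = fun k => Phi ε (sq ε k) := by
      funext k; exact hsq_succ ε k
    rw [h3] at h1
    exact tendsto_nhds_unique h2 h1
  have hclampQ : ∀ ε : ℝ, 0 < ε → S16.clamp (Q ε) = Q ε :=
    fun ε hε => S16.clamp_eq_self (hQ_Icc ε hε)
  have hgen_eq : ∀ ε : ℝ, 0 < ε → ∀ i, gen (b i) (Q ε) = ε * Q ε i := by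
    intro ε hε i
    have hfix : S16.FF (b i) (unitvec i) (S16.clamp (Q ε)) / (ε + c i) = Q ε i :=
      congrFun (hQ_fixed ε hε) i
    have hFF : S16.FF (b i) (unitvec i) (Q ε) = (ε + c i) * Q ε i := by
      rw [hclampQ ε hε, div_eq_iff (hden ε hε.le i).ne'] at hfix
      linear_combination hfix
    have hsplit := S16.gen_split (hbsum i) (hQ_Icc ε hε) i
    rw [hsplit, hFF]
    have : b i (unitvec i) = -c i := by simp [hc_def]
    rw [this]
    ring
  have hQ_min : ∀ ε : ℝ, 0 < ε → ∀ r : Fin n → ℝ, (∀ l, r l ∈ Icc (0:ℝ) 1) →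
      (∀ i, gen (b i) r - ε * r i = 0) → ∀ l, Q ε l ≤ r l := by
    intro ε hε r hr hroot
    have hclampr : S16.clamp r = r := S16.clamp_eq_self hr
    have hfixr : Phi ε r = r := by
      funext i
      have hsplit := S16.gen_split (hbsum i) hr i
      have hg : gen (b i) r = ε * r i := by linarith [hroot i]
      have hFF : S16.FF (b i) (unitvec i) r = (ε + c i) * r i := by
        have hb : b i (unitvec i) = -c i := by simp [hc_def]
        rw [hg, hb] at hsplit
        linarith
      simp only [hPhi_def, hclampr, hFF]
      exact mul_div_cancel_left₀ (r i) (hden ε hε.le i).ne'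
    have hle : ∀ k, sq ε k ≤ r := by
      intro k
      induction k with
      | zero => intro l; simpa [hsq_def] using (hr l).1
      | succ k ih =>
        rw [hsq_succ]
        calc Phi ε (sq ε k) ≤ Phi ε r := hPhi_mono ε hε.le _ _ ih
          _ = r := hfixr
    intro l
    exact ciSup_le fun k => hle k l
  have hQ_monoE : ∀ ε1 ε2 : ℝ, 0 < ε1 → ε1 ≤ ε2 → ∀ l, Q ε2 l ≤ Q ε1 l := by
    intro ε1 ε2 h1 h12 l
    have hsqle : ∀ k, sq ε2 k ≤ sq ε1 k := by
      intro k
      induction k with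
      | zero => intro l; simp [hsq_def]
      | succ k ih =>
        rw [hsq_succ, hsq_succ]
        intro m
        calc Phi ε2 (sq ε2 k) m ≤ Phi ε2 (sq ε1 k) m := hPhi_mono ε2 (by linarith) _ _ ih m
          _ ≤ Phi ε1 (sq ε1 k) m := by
              simp only [hPhi_def]
              exact div_le_div_of_nonneg_left (hFFmem m _).1 (hden ε1 h1.le m) (by linarith)
    exact ciSup_le fun k => le_trans (hsqle k l) (le_ciSup (hbdd ε1 h1.le l) k)
  -- the limit as ε → 0⁺
  set es : ℕ → ℝ := fun k => 1 / (k + 1) with hes_def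
  have hes_pos : ∀ k, 0 < es k := fun k => by positivity
  have hes_anti : ∀ k, es (k + 1) ≤ es k := by
    intro k
    apply div_le_div_of_nonneg_left (by norm_num) (by positivity)
    push_cast; linarith
  set L : Fin n → ℝ := fun l => ⨆ k, Q (es k) l with hL_def
  have hLbdd : ∀ l, BddAbove (range fun k => Q (es k) l) := by
    intro l
    refine ⟨1, ?_⟩
    rintro x ⟨k, rfl⟩
    exact (hQ_lt_one (es k) (hes_pos k) l).le
  have hL_mem : ∀ l, L l ∈ Icc (0:ℝ) 1 := by
    intro l
    constructor
    · exact le_trans (hQ_nonneg (es 0) (hes_pos 0).le l) (le_ciSup (hLbdd l) 0)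
    · exact ciSup_le fun k => (hQ_lt_one (es k) (hes_pos k) l).le
  have hQes_mono : Monotone fun k => Q (es k) := by
    apply monotone_nat_of_le_succ
    intro k l
    exact hQ_monoE (es (k + 1)) (es k) (hes_pos (k + 1)) (hes_anti k) l
  have hQesL : Tendsto (fun k => Q (es k)) atTop (nhds L) := by
    rw [tendsto_pi_nhds]
    intro l
    exact tendsto_atTop_ciSup (fun k m hkm => hQes_mono hkm l) (hLbdd l)
  have hes0 : Tendsto es atTop (nhds 0) := by
    simpa [hes_def] using tendsto_one_div_add_atTop_nhds_zero_nat (𝕜 := ℝ)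
  have hgenL : ∀ i, gen (b i) L = 0 := by
    intro i
    have hcont := S16.continuous_genc (hbsum i)
    have h1 : Tendsto (fun k => gen (b i) (S16.clamp (Q (es k)))) atTop
        (nhds (gen (b i) (S16.clamp L))) := (hcont.tendsto L).comp hQesL
    have h2 : (fun k => gen (b i) (S16.clamp (Q (es k)))) =
        fun k => es k * Q (es k) i := by
      funext k
      rw [hclampQ (es k) (hes_pos k), hgen_eq (es k) (hes_pos k) i]
    rw [h2] at h1
    have h3 : Tendsto (fun k => es k * Q (es k) i) atTop (nhds (0 * L i)) :=
      hes0.mul ((tendsto_pi_nhds.1 hQesL) i)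
    rw [zero_mul] at h3
    have h4 : gen (b i) (S16.clamp L) = 0 := tendsto_nhds_unique h1 h3
    rwa [S16.clamp_eq_self hL_mem] at h4
  have hL1 : L = fun _ => 1 := hmin1 L hL_mem hgenL
  refine ⟨Q, ?_, hQ_monoE, ?_⟩
  · intro ε hε
    exact ⟨fun l => ⟨hQ_nonneg ε hε.le l, hQ_lt_one ε hε l⟩,
      fun i => by rw [hgen_eq ε hε i]; ring, hQ_min ε hε⟩
  · rw [tendsto_pi_nhds]
    intro l
    rw [tendsto_order]
    constructor
    · intro a ha
      have haL : a < L l := by rw [hL1]; exact ha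
      have : a < ⨆ k, Q (es k) l := haL
      obtain ⟨k, hk⟩ := exists_lt_of_lt_ciSup this
      filter_upwards [Ioo_mem_nhdsGT (hes_pos k)]
        with ε hεm
      exact lt_of_lt_of_le hk (hQ_monoE ε (es k) hεm.1 hεm.2.le l)
    · intro a ha
      filter_upwards [self_mem_nhdsWithin] with ε hεm
      exact lt_trans (hQ_lt_one ε hεm l) ha
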